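/- For every q with 0 ≤ q < σ_max(F_{0:N})^{−2}, the matrices S₀,…,S_N produced by the Riccati recursion are all positive definite and det(I_{m(N+1)} − q·F_{0:N}ᵀF_{0:N}) = ∏_{k=0}^{N} det S_k. -/

import Mathlib

open MeasureTheory Real Matrix

/-- State transition matrix `Φ_{j,k} = A_{j−1}···A_k` (with `Φ_{k,k} = I`). -/
noncomputable def Phi {n : ℕ} (A : ℕ → Matrix (Fin n) (Fin n) ℝ) : ℕ → ℕ → Matrix (Fin n) (Fin n) ℝ
  | 0, _ => 1
  | j + 1, k => if j + 1 ≤ k then 1 else A j * Phi A j k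

/-- The block lower triangular matrix `F_{0:N}` of the system on `[0,N]`, with
`(j,k)` block `C_j Φ_{j,k+1} B_k` for `j > k`, `D_k` for `j = k`, and `0` otherwise. -/
noncomputable def Fsys {n m r : ℕ} (N : ℕ)
    (A : ℕ → Matrix (Fin n) (Fin n) ℝ) (B : ℕ → Matrix (Fin n) (Fin m) ℝ)
    (C : ℕ → Matrix (Fin r) (Fin n) ℝ) (D : ℕ → Matrix (Fin r) (Fin m) ℝ) :
    Matrix (Fin (N + 1) × Fin r) (Fin (N + 1) × Fin m) ℝ :=
  Matrix.of fun jp ki =>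
    if (ki.1 : ℕ) < (jp.1 : ℕ) then (C jp.1 * Phi A jp.1 (ki.1 + 1) * B ki.1) jp.2 ki.2
    else if (jp.1 : ℕ) = (ki.1 : ℕ) then D ki.1 jp.2 ki.2
    else 0

/-- `S_k = I_r − C_k R C_kᵀ − q D_k D_kᵀ`. -/
noncomputable def Smat {n m r : ℕ}
    (C : ℕ → Matrix (Fin r) (Fin n) ℝ) (D : ℕ → Matrix (Fin r) (Fin m) ℝ)
    (q : ℝ) (R : Matrix (Fin n) (Fin n) ℝ) (k : ℕ) : Matrix (Fin r) (Fin r) ℝ :=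
  1 - C k * R * (C k)ᵀ - q • (D k * (D k)ᵀ)

/-- `M_k = −(A_k R C_kᵀ + q B_k D_kᵀ) S_k⁻¹`. -/
noncomputable def Mmat {n m r : ℕ}
    (A : ℕ → Matrix (Fin n) (Fin n) ℝ) (B : ℕ → Matrix (Fin n) (Fin m) ℝ)
    (C : ℕ → Matrix (Fin r) (Fin n) ℝ) (D : ℕ → Matrix (Fin r) (Fin m) ℝ)
    (q : ℝ) (R : Matrix (Fin n) (Fin n) ℝ) (k : ℕ) : Matrix (Fin n) (Fin r) ℝ :=
  -(A k * R * (C k)ᵀ + q • (B k * (D k)ᵀ)) * (Smat C D q R k)⁻¹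

/-- The Riccati recursion `R₀ = 0`,
`R_{k+1} = A_k R_k A_kᵀ + q B_k B_kᵀ + M_k S_k M_kᵀ`. -/
noncomputable def Rmat {n m r : ℕ}
    (A : ℕ → Matrix (Fin n) (Fin n) ℝ) (B : ℕ → Matrix (Fin n) (Fin m) ℝ)
    (C : ℕ → Matrix (Fin r) (Fin n) ℝ) (D : ℕ → Matrix (Fin r) (Fin m) ℝ)
    (q : ℝ) : ℕ → Matrix (Fin n) (Fin n) ℝ
  | 0 => 0
  | k + 1 =>
    A k * Rmat A B C D q k * (A k)ᵀ + q • (B k * (B k)ᵀ) +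
      Mmat A B C D q (Rmat A B C D q k) k * Smat C D q (Rmat A B C D q k) k *
        (Mmat A B C D q (Rmat A B C D q k) k)ᵀ

/-- The matrix `S_k` along the Riccati recursion. -/
noncomputable def RicS {n m r : ℕ}
    (A : ℕ → Matrix (Fin n) (Fin n) ℝ) (B : ℕ → Matrix (Fin n) (Fin m) ℝ)
    (C : ℕ → Matrix (Fin r) (Fin n) ℝ) (D : ℕ → Matrix (Fin r) (Fin m) ℝ)
    (q : ℝ) (k : ℕ) : Matrix (Fin r) (Fin r) ℝ :=
  Smat C D q (Rmat A B C D q k) k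

/-- The largest singular value of a matrix: the supremum of `‖F w‖` over unit vectors. -/
noncomputable def sigmaMax {κ ι : Type*} [Fintype κ] [Fintype ι]
    (F : Matrix κ ι ℝ) : ℝ :=
  sSup {x : ℝ | ∃ w : ι → ℝ, (∑ i, (w i)^2) = 1 ∧ x = Real.sqrt (∑ j, (F.mulVec w j)^2)}


namespace RicAux

variable {n m r : ℕ}

lemma phi_self (A : ℕ → Matrix (Fin n) (Fin n) ℝ) (k : ℕ) : Phi A k k = 1 := by
  cases k with
  | zero => rfl
  | succ j => rw [Phi, if_pos le_rfl]

lemma phi_succ (A : ℕ → Matrix (Fin n) (Fin n) ℝ) {j k : ℕ} (h : k ≤ j) :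
    Phi A (j + 1) k = A j * Phi A j k := by
  rw [Phi, if_neg (by omega)]

lemma phi_comp (A : ℕ → Matrix (Fin n) (Fin n) ℝ) {l k j : ℕ} (h1 : l ≤ k) (h2 : k ≤ j) :
    Phi A j l = Phi A j k * Phi A k l := by
  induction j, h2 using Nat.le_induction with
  | base => rw [phi_self, one_mul]
  | succ j hj ih => rw [phi_succ A (le_trans h1 hj), phi_succ A hj, ih, Matrix.mul_assoc]

variable (A : ℕ → Matrix (Fin n) (Fin n) ℝ) (B : ℕ → Matrix (Fin n) (Fin m) ℝ)
  (C : ℕ → Matrix (Fin r) (Fin n) ℝ) (D : ℕ → Matrix (Fin r) (Fin m) ℝ) (q : ℝ)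

/-- `M_k` along the recursion. -/
noncomputable def MM (k : ℕ) : Matrix (Fin n) (Fin r) ℝ :=
  Mmat A B C D q (Rmat A B C D q k) k

lemma smat_transpose {R : Matrix (Fin n) (Fin n) ℝ} (hR : Rᵀ = R) (k : ℕ) :
    (Smat C D q R k)ᵀ = Smat C D q R k := by
  unfold Smat
  simp [Matrix.transpose_sub, Matrix.transpose_smul, Matrix.transpose_mul,
    Matrix.transpose_one, Matrix.mul_assoc, hR]

lemma rmat_transpose : ∀ k, (Rmat A B C D q k)ᵀ = Rmat A B C D q k := by
  intro k
  induction k with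
  | zero => simp [Rmat]
  | succ k ih =>
    have hs := smat_transpose C D q ih k
    rw [Rmat]
    simp [Matrix.transpose_add, Matrix.transpose_smul, Matrix.transpose_mul,
      Matrix.transpose_transpose, Matrix.mul_assoc, ih, hs]

lemma rics_transpose (k : ℕ) : (RicS A B C D q k)ᵀ = RicS A B C D q k :=
  smat_transpose C D q (rmat_transpose A B C D q k) k

lemma rics_hermitian (k : ℕ) : (RicS A B C D q k).IsHermitian := by
  have h := rics_transpose A B C D q k
  ext i j
  rw [Matrix.conjTranspose_apply, star_trivial]
  exact congrFun (congrFun h i) j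

/-- `∑_{l<k} Φ_{k,l+1} B_l B_lᵀ Φ_{k,l+1}ᵀ`. -/
noncomputable def RBsum (k : ℕ) : Matrix (Fin n) (Fin n) ℝ :=
  ∑ l ∈ Finset.range k, Phi A k (l + 1) * (B l * (B l)ᵀ) * (Phi A k (l + 1))ᵀ

/-- `∑_{l<k} Φ_{k,l+1} M_l S_l M_lᵀ Φ_{k,l+1}ᵀ`. -/
noncomputable def RMsum (k : ℕ) : Matrix (Fin n) (Fin n) ℝ :=
  ∑ l ∈ Finset.range k,
    Phi A k (l + 1) * (MM A B C D q l * RicS A B C D q l * (MM A B C D q l)ᵀ) *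
      (Phi A k (l + 1))ᵀ

lemma sum_phi_succ (X : ℕ → Matrix (Fin n) (Fin n) ℝ) (k : ℕ) :
    ∑ l ∈ Finset.range (k + 1), Phi A (k + 1) (l + 1) * X l * (Phi A (k + 1) (l + 1))ᵀ =
      A k * (∑ l ∈ Finset.range k, Phi A k (l + 1) * X l * (Phi A k (l + 1))ᵀ) * (A k)ᵀ
        + X k := by
  rw [Finset.sum_range_succ, phi_self]
  simp only [Matrix.one_mul, Matrix.transpose_one, Matrix.mul_one]
  congr 1
  rw [Finset.mul_sum, Finset.sum_mul]
  refine Finset.sum_congr rfl fun l hl => ?_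
  rw [phi_succ A (by simpa using Finset.mem_range.mp hl)]
  simp [Matrix.transpose_mul, Matrix.mul_assoc]

lemma rmat_eq (k : ℕ) :
    Rmat A B C D q k = q • RBsum A B k + RMsum A B C D q k := by
  induction k with
  | zero => simp [Rmat, RBsum, RMsum]
  | succ k ih =>
    have hR : Rmat A B C D q (k + 1) =
        A k * Rmat A B C D q k * (A k)ᵀ + q • (B k * (B k)ᵀ)
          + MM A B C D q k * RicS A B C D q k * (MM A B C D q k)ᵀ := rfl
    rw [hR]
    unfold RBsum RMsum
    rw [sum_phi_succ, sum_phi_succ]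
    conv_lhs => rw [ih]
    unfold RBsum RMsum
    simp only [Matrix.mul_add, Matrix.add_mul, Matrix.mul_smul, Matrix.smul_mul, smul_add]
    abel

lemma mm_mul_ss {k : ℕ} (h : IsUnit (RicS A B C D q k).det) :
    MM A B C D q k * RicS A B C D q k =
      -(A k * Rmat A B C D q k * (C k)ᵀ + q • (B k * (D k)ᵀ)) := by
  unfold MM Mmat RicS
  rw [Matrix.mul_assoc, Matrix.nonsing_inv_mul _ (by exact h), Matrix.mul_one]


section Blk

variable (N : ℕ)

/-- Assemble a family of `a × b` blocks into a big matrix. -/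
noncomputable def blk {a b : ℕ} (f : ℕ → ℕ → Matrix (Fin a) (Fin b) ℝ) :
    Matrix (Fin (N + 1) × Fin a) (Fin (N + 1) × Fin b) ℝ :=
  Matrix.of fun p s => f p.1 s.1 p.2 s.2

lemma blk_ext {a b : ℕ} {f g : ℕ → ℕ → Matrix (Fin a) (Fin b) ℝ}
    (h : ∀ j l : Fin (N + 1), f (j : ℕ) (l : ℕ) = g (j : ℕ) (l : ℕ)) :
    blk N f = blk N g := by
  ext ⟨j, p⟩ ⟨l, t⟩
  simp only [blk, Matrix.of_apply]
  rw [h j l]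

lemma blk_mul {a b c : ℕ} (f : ℕ → ℕ → Matrix (Fin a) (Fin b) ℝ)
    (g : ℕ → ℕ → Matrix (Fin b) (Fin c) ℝ) :
    blk N f * blk N g = blk N (fun j l => ∑ s : Fin (N + 1), f j (s : ℕ) * g (s : ℕ) l) := by
  ext ⟨j, p⟩ ⟨l, t⟩
  simp [blk, Matrix.mul_apply, Matrix.sum_apply, Fintype.sum_prod_type]

lemma blk_transpose {a b : ℕ} (f : ℕ → ℕ → Matrix (Fin a) (Fin b) ℝ) :
    (blk N f)ᵀ = blk N (fun j l => (f l j)ᵀ) := rfl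

lemma blk_one {a : ℕ} :
    (1 : Matrix (Fin (N + 1) × Fin a) (Fin (N + 1) × Fin a) ℝ) =
      blk N (fun j l => if j = l then 1 else 0) := by
  ext ⟨j, p⟩ ⟨l, t⟩
  simp only [blk, Matrix.of_apply, Matrix.one_apply]
  by_cases h : (j : ℕ) = (l : ℕ)
  · have : j = l := Fin.ext h
    subst this
    simp [Matrix.one_apply]
  · have : ¬ (j, p) = (l, t) := by
      intro hc
      exact h (congrArg (fun z : Fin (N + 1) × Fin a => ((z.1 : ℕ))) hc)
    simp [this, h]

lemma blk_smul {a b : ℕ} (c : ℝ) (f : ℕ → ℕ → Matrix (Fin a) (Fin b) ℝ) :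
    c • blk N f = blk N (fun j l => c • f j l) := rfl

lemma blk_sub {a b : ℕ} (f g : ℕ → ℕ → Matrix (Fin a) (Fin b) ℝ) :
    blk N f - blk N g = blk N (fun j l => f j l - g j l) := rfl

/-- Subtype-of-block equivalence. -/
def blkEquiv {a : ℕ} (v : Fin (N + 1)) :
    {p : Fin (N + 1) × Fin a // p.1 = v} ≃ Fin a where
  toFun p := p.1.2
  invFun s := ⟨(v, s), rfl⟩
  left_inv := by rintro ⟨⟨x, y⟩, rfl⟩; rfl
  right_inv s := rfl

lemma det_blk {a : ℕ} (f : ℕ → ℕ → Matrix (Fin a) (Fin a) ℝ)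
    (hlow : ∀ j l : Fin (N + 1), (j : ℕ) < (l : ℕ) → f (j : ℕ) (l : ℕ) = 0) :
    (blk N f).det = ∏ v : Fin (N + 1), (f (v : ℕ) (v : ℕ)).det := by
  rw [← Matrix.det_transpose]
  have htri : ((blk N f)ᵀ).BlockTriangular (Prod.fst) := by
    rintro ⟨j, p⟩ ⟨l, t⟩ h
    show f (l : ℕ) (j : ℕ) t p = 0
    rw [hlow l j (Fin.lt_iff_val_lt_val.mp h)]
    rfl
  rw [htri.det_fintype]
  refine Finset.prod_congr rfl fun v _ => ?_
  have : ((blk N f)ᵀ).toSquareBlock Prod.fst v =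
      ((f (v : ℕ) (v : ℕ))ᵀ).submatrix (blkEquiv N v) (blkEquiv N v) := by
    ext i j
    rcases i with ⟨⟨i1, i2⟩, hi⟩
    rcases j with ⟨⟨j1, j2⟩, hj⟩
    cases hi; cases hj
    rfl
  rw [this, Matrix.det_submatrix_equiv_self, Matrix.det_transpose]

end Blk


/-- Blocks of `Fsys`. -/
noncomputable def Fb (j l : ℕ) : Matrix (Fin r) (Fin m) ℝ :=
  if l < j then C j * Phi A j (l + 1) * B l else if j = l then D l else 0

/-- Blocks of `1 - q (F Fᵀ)`. -/
noncomputable def Tb (N : ℕ) (j l : ℕ) : Matrix (Fin r) (Fin r) ℝ :=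
  (if j = l then 1 else 0) -
    q • ∑ s ∈ Finset.range (N + 1), Fb A B C D j s * (Fb A B C D l s)ᵀ

lemma fsys_eq (N : ℕ) : Fsys N A B C D = blk N (Fb A B C D) := by
  ext ⟨j, p⟩ ⟨l, t⟩
  simp only [Fsys, blk, Fb, Matrix.of_apply]
  split_ifs <;> simp

lemma bigT_eq (N : ℕ) :
    1 - q • (Fsys N A B C D * (Fsys N A B C D)ᵀ) = blk N (Tb A B C D q N) := by
  rw [fsys_eq, blk_transpose, blk_mul, blk_smul, blk_one, blk_sub]
  refine blk_ext N fun j l => ?_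
  unfold Tb
  congr 2
  exact Fin.sum_univ_eq_sum_range
    (fun s => Fb A B C D (j : ℕ) s * (Fb A B C D (l : ℕ) s)ᵀ) (N + 1)

lemma tb_symm (N j l : ℕ) : (Tb A B C D q N j l)ᵀ = Tb A B C D q N l j := by
  unfold Tb
  rw [Matrix.transpose_sub, Matrix.transpose_smul, Matrix.transpose_sum]
  congr 1
  · by_cases h : j = l
    · subst h; simp
    · rw [if_neg h, if_neg fun hh => h hh.symm]; simp
  · congr 1
    refine Finset.sum_congr rfl fun s _ => ?_
    rw [Matrix.transpose_mul, Matrix.transpose_transpose]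

section Sigma

variable {κ ι : Type*} [Fintype κ] [Fintype ι]

lemma sigma_bddAbove (F : Matrix κ ι ℝ) :
    BddAbove {x : ℝ | ∃ w : ι → ℝ, (∑ i, (w i)^2) = 1 ∧
      x = Real.sqrt (∑ j, (F.mulVec w j)^2)} := by
  refine ⟨Real.sqrt (∑ j, ∑ i, (F j i)^2), ?_⟩
  rintro x ⟨w, hw, rfl⟩
  apply Real.sqrt_le_sqrt
  refine Finset.sum_le_sum fun j _ => ?_
  calc (F.mulVec w j)^2 = (∑ i, F j i * w i)^2 := by
        simp [Matrix.mulVec, dotProduct]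
    _ ≤ (∑ i, (F j i)^2) * ∑ i, (w i)^2 := Finset.sum_mul_sq_le_sq_mul_sq _ _ _
    _ = ∑ i, (F j i)^2 := by rw [hw, mul_one]

lemma sigma_nonneg [Nonempty ι] (F : Matrix κ ι ℝ) : 0 ≤ sigmaMax F := by
  classical
  obtain ⟨i0⟩ := (inferInstance : Nonempty ι)
  set w : ι → ℝ := fun i => if i = i0 then 1 else 0 with hwdef
  have hw : ∑ i, (w i)^2 = 1 := by
    simp [hwdef, sq, ite_mul, Finset.sum_ite_eq']
  exact le_trans (Real.sqrt_nonneg _) (le_csSup (sigma_bddAbove F) ⟨w, hw, rfl⟩)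

lemma sigma_bound [Nonempty ι] (F : Matrix κ ι ℝ) (w : ι → ℝ) :
    ∑ j, (F.mulVec w j)^2 ≤ (sigmaMax F)^2 * ∑ i, (w i)^2 := by
  by_cases hw : w = 0
  · subst hw
    simp [Matrix.mulVec_zero]
  · have hc : 0 < ∑ i, (w i)^2 := by
      obtain ⟨i0, hi0⟩ := Function.ne_iff.mp hw
      exact Finset.sum_pos' (fun i _ => sq_nonneg _)
        ⟨i0, Finset.mem_univ _, lt_of_le_of_ne (sq_nonneg _) (Ne.symm (pow_ne_zero 2 hi0))⟩
    set c := ∑ i, (w i)^2 with hcdef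
    set u := (Real.sqrt c)⁻¹ • w with hu
    have hu1 : ∑ i, (u i)^2 = 1 := by
      simp only [hu, Pi.smul_apply, smul_eq_mul, mul_pow, ← Finset.mul_sum]
      rw [inv_pow, Real.sq_sqrt hc.le, inv_mul_cancel₀ hc.ne']
    have hmem : Real.sqrt (∑ j, (F.mulVec u j)^2) ≤ sigmaMax F :=
      le_csSup (sigma_bddAbove F) ⟨u, hu1, rfl⟩
    have ha : (0:ℝ) ≤ ∑ j, (F.mulVec u j)^2 := Finset.sum_nonneg fun j _ => sq_nonneg _
    have h2 : ∑ j, (F.mulVec u j)^2 ≤ (sigmaMax F)^2 := by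
      calc ∑ j, (F.mulVec u j)^2 = (Real.sqrt (∑ j, (F.mulVec u j)^2))^2 :=
            (Real.sq_sqrt ha).symm
        _ ≤ (sigmaMax F)^2 := pow_le_pow_left₀ (Real.sqrt_nonneg _) hmem 2
    have hFu : ∑ j, (F.mulVec u j)^2 = c⁻¹ * ∑ j, (F.mulVec w j)^2 := by
      simp only [hu, Matrix.mulVec_smul, Pi.smul_apply, smul_eq_mul, mul_pow,
        ← Finset.mul_sum, inv_pow, Real.sq_sqrt hc.le]
    rw [hFu] at h2
    have h3 := mul_le_mul_of_nonneg_left h2 hc.le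
    rw [← mul_assoc, mul_inv_cancel₀ hc.ne', one_mul] at h3
    nlinarith [h3]

lemma sigma_bound_transpose [Nonempty ι] (F : Matrix κ ι ℝ) (x : κ → ℝ) :
    ∑ i, ((Fᵀ).mulVec x i)^2 ≤ (sigmaMax F)^2 * ∑ j, (x j)^2 := by
  set y := Fᵀ.mulVec x with hy
  have dualpair : ∀ v : ι → ℝ, (Fᵀ.mulVec x) ⬝ᵥ v = x ⬝ᵥ F.mulVec v := by
    intro v
    rw [Matrix.mulVec_transpose, ← Matrix.dotProduct_mulVec]
  have hyd : ∑ i, (y i)^2 = x ⬝ᵥ F.mulVec y := by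
    have h1 : ∑ i, (y i)^2 = y ⬝ᵥ y := by simp [dotProduct, sq]
    exact h1.trans (dualpair y)
  have key : (∑ i, (y i)^2)^2 ≤ (∑ j, (x j)^2) * ((sigmaMax F)^2 * ∑ i, (y i)^2) := by
    calc (∑ i, (y i)^2)^2 = (∑ j, x j * (F.mulVec y) j)^2 := by
          rw [hyd]; simp [dotProduct]
      _ ≤ (∑ j, (x j)^2) * (∑ j, ((F.mulVec y) j)^2) := Finset.sum_mul_sq_le_sq_mul_sq _ _ _
      _ ≤ (∑ j, (x j)^2) * ((sigmaMax F)^2 * ∑ i, (y i)^2) :=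
          mul_le_mul_of_nonneg_left (sigma_bound F y)
            (Finset.sum_nonneg fun _ _ => sq_nonneg _)
  have ha : 0 ≤ ∑ i, (y i)^2 := Finset.sum_nonneg fun _ _ => sq_nonneg _
  rcases eq_or_lt_of_le ha with h0 | h0
  · rw [← h0]; positivity
  · nlinarith [key, h0]

end Sigma

lemma quad_pos_of_factor {κ : Type*} [Fintype κ] [DecidableEq κ]
    {T L G : Matrix κ κ ℝ} (hL : IsUnit L.det)
    (hT : ∀ z : κ → ℝ, z ≠ 0 → 0 < z ⬝ᵥ (T.mulVec z))
    (h : T = L * G * Lᵀ) (x : κ → ℝ) (hx : x ≠ 0) : 0 < x ⬝ᵥ (G.mulVec x) := by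
  set z := (Lᵀ)⁻¹.mulVec x with hz
  have hdet : IsUnit (Lᵀ).det := by rwa [Matrix.det_transpose]
  have hzz : Lᵀ.mulVec z = x := by
    rw [hz, Matrix.mulVec_mulVec, Matrix.mul_nonsing_inv _ hdet, Matrix.one_mulVec]
  have hz0 : z ≠ 0 := by
    intro h0
    apply hx
    rw [← hzz, h0, Matrix.mulVec_zero]
  have hpos := hT z hz0
  have hcalc : z ⬝ᵥ T.mulVec z = x ⬝ᵥ G.mulVec x := by
    rw [h, ← Matrix.mulVec_mulVec, ← Matrix.mulVec_mulVec, hzz,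
      Matrix.dotProduct_mulVec, ← Matrix.mulVec_transpose, hzz]
  rw [← hcalc]
  exact hpos

lemma quad_pos_diag (N : ℕ) {a : ℕ} (G : ℕ → ℕ → Matrix (Fin a) (Fin a) ℝ)
    (hpos : ∀ w : Fin (N + 1) × Fin a → ℝ, w ≠ 0 → 0 < w ⬝ᵥ ((blk N G).mulVec w))
    (k : Fin (N + 1)) (x : Fin a → ℝ) (hx : x ≠ 0) :
    0 < x ⬝ᵥ ((G (k : ℕ) (k : ℕ)).mulVec x) := by
  set w : Fin (N + 1) × Fin a → ℝ := fun p => if p.1 = k then x p.2 else 0 with hw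
  have hw0 : w ≠ 0 := by
    obtain ⟨p0, hp0⟩ := Function.ne_iff.mp hx
    intro h0
    apply hp0
    have := congrFun h0 (k, p0)
    simpa [hw] using this
  have hkey : w ⬝ᵥ ((blk N G).mulVec w) = x ⬝ᵥ ((G (k : ℕ) (k : ℕ)).mulVec x) := by
    simp [dotProduct, Matrix.mulVec, blk, hw, Fintype.sum_prod_type, ite_mul,
      mul_ite, mul_zero, zero_mul, Finset.sum_ite_eq', Finset.sum_ite_eq]
  rw [← hkey]
  exact hpos w hw0


/-- Strictly-lower blocks of the `L` factor. -/
noncomputable def Lp (j s : ℕ) : Matrix (Fin r) (Fin r) ℝ :=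
  C j * Phi A j (s + 1) * MM A B C D q s

lemma conj_sumB {l j : ℕ} (hlj : l ≤ j) :
    ∑ s ∈ Finset.range l, Fb A B C D j s * (Fb A B C D l s)ᵀ
      = C j * (Phi A j l * RBsum A B l) * (C l)ᵀ := by
  rw [RBsum, Matrix.mul_sum, Matrix.mul_sum, Matrix.sum_mul]
  refine Finset.sum_congr rfl fun s hs => ?_
  have hs' : s + 1 ≤ l := Finset.mem_range.mp hs
  have h1 : Fb A B C D j s = C j * Phi A j (s + 1) * B s := by
    rw [Fb, if_pos (by omega)]
  have h2 : Fb A B C D l s = C l * Phi A l (s + 1) * B s := by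
    rw [Fb, if_pos (by omega)]
  rw [h1, h2, phi_comp A hs' hlj]
  simp [Matrix.transpose_mul, Matrix.mul_assoc]

lemma conj_sumM {l j : ℕ} (hlj : l ≤ j) :
    ∑ s ∈ Finset.range l,
        Lp A B C D q j s * RicS A B C D q s * (Lp A B C D q l s)ᵀ
      = C j * (Phi A j l * RMsum A B C D q l) * (C l)ᵀ := by
  rw [RMsum, Matrix.mul_sum, Matrix.mul_sum, Matrix.sum_mul]
  refine Finset.sum_congr rfl fun s hs => ?_
  have hs' : s + 1 ≤ l := Finset.mem_range.mp hs
  rw [Lp, Lp, phi_comp A hs' hlj]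
  simp [Matrix.transpose_mul, Matrix.mul_assoc]

lemma fb_zero {l s : ℕ} (h : l < s) : Fb A B C D l s = 0 := by
  rw [Fb, if_neg (by omega), if_neg (by omega)]

lemma trim_sum (N : ℕ) {l j : ℕ} (hl : l ≤ N) :
    ∑ s ∈ Finset.range (N + 1), Fb A B C D j s * (Fb A B C D l s)ᵀ
      = ∑ s ∈ Finset.range (l + 1), Fb A B C D j s * (Fb A B C D l s)ᵀ := by
  refine (Finset.sum_subset (Finset.range_subset_range.mpr (by omega)) fun s _ hs => ?_).symm
  rw [fb_zero A B C D (l := l) (by simpa using hs)]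
  simp

lemma coreDiag (N : ℕ) {l : ℕ} (hl : l ≤ N) :
    Tb A B C D q N l l =
      (∑ s ∈ Finset.range l,
        Lp A B C D q l s * RicS A B C D q s * (Lp A B C D q l s)ᵀ) + RicS A B C D q l := by
  rw [Tb, trim_sum A B C D N hl, Finset.sum_range_succ, conj_sumB A B C D (le_refl l),
    phi_self, Matrix.one_mul, conj_sumM A B C D q (le_refl l), phi_self, Matrix.one_mul]
  have hFll : Fb A B C D l l = D l := by rw [Fb, if_neg (lt_irrefl l), if_pos rfl]
  rw [hFll, if_pos rfl]
  have hR := rmat_eq A B C D q l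
  rw [RicS, Smat, hR]
  simp only [Matrix.mul_add, Matrix.add_mul, Matrix.mul_smul, Matrix.smul_mul, smul_add]
  abel

lemma coreOff (N : ℕ) {l j : ℕ} (hlj : l < j) (hj : j ≤ N)
    (hS : IsUnit (RicS A B C D q l).det) :
    Tb A B C D q N j l =
      (∑ s ∈ Finset.range l,
        Lp A B C D q j s * RicS A B C D q s * (Lp A B C D q l s)ᵀ) +
        Lp A B C D q j l * RicS A B C D q l := by
  rw [Tb, trim_sum A B C D N (by omega), Finset.sum_range_succ,
    conj_sumB A B C D (le_of_lt hlj), conj_sumM A B C D q (le_of_lt hlj)]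
  have hFll : Fb A B C D l l = D l := by rw [Fb, if_neg (lt_irrefl l), if_pos rfl]
  have hFjl : Fb A B C D j l = C j * Phi A j (l + 1) * B l := by rw [Fb, if_pos hlj]
  have hMS : Lp A B C D q j l * RicS A B C D q l =
      -(C j * Phi A j (l + 1) *
        (A l * Rmat A B C D q l * (C l)ᵀ + q • (B l * (D l)ᵀ))) := by
    rw [Lp, Matrix.mul_assoc (C j * Phi A j (l + 1)), mm_mul_ss A B C D q hS,
      Matrix.mul_neg]
  have hphi : Phi A j l = Phi A j (l + 1) * A l := by
    rw [phi_comp A (Nat.le_succ l) hlj, phi_succ A (le_refl l), phi_self, Matrix.mul_one]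
  rw [hFll, hFjl, if_neg (by omega), hMS, hphi]
  have hR := rmat_eq A B C D q l
  rw [hR]
  simp only [Matrix.mul_add, Matrix.add_mul, Matrix.mul_smul, Matrix.smul_mul, smul_add,
    Matrix.mul_neg, Matrix.neg_mul, Matrix.mul_assoc]
  abel

/-- The (partial) unit lower-triangular factor, at stage `K`. -/
noncomputable def Lb (K j l : ℕ) : Matrix (Fin r) (Fin r) ℝ :=
  if l < K ∧ l < j then Lp A B C D q j l else if j = l then 1 else 0

/-- The middle factor at stage `K`. -/
noncomputable def Gb (N K j l : ℕ) : Matrix (Fin r) (Fin r) ℝ :=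
  if j < K ∨ l < K then (if j = l then RicS A B C D q j else 0)
  else Tb A B C D q N j l -
    ∑ s ∈ Finset.range K,
      Lb A B C D q K j s * RicS A B C D q s * (Lb A B C D q K l s)ᵀ

lemma master_low (N K : ℕ) {l j : ℕ} (hlj : l ≤ j) (hj : j ≤ N) (hlK : l < K)
    (hS : ∀ s, s < K → IsUnit (RicS A B C D q s).det) :
    Tb A B C D q N j l =
      ∑ s ∈ Finset.range K,
        Lb A B C D q K j s * RicS A B C D q s * (Lb A B C D q K l s)ᵀ := by
  have htrim : ∑ s ∈ Finset.range K,
        Lb A B C D q K j s * RicS A B C D q s * (Lb A B C D q K l s)ᵀ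
      = ∑ s ∈ Finset.range (l + 1),
        Lb A B C D q K j s * RicS A B C D q s * (Lb A B C D q K l s)ᵀ := by
    refine (Finset.sum_subset (Finset.range_subset_range.mpr (by omega)) fun s _ hs => ?_).symm
    have hls : l < s := by simpa using hs
    have : Lb A B C D q K l s = 0 := by
      rw [Lb, if_neg (by omega), if_neg (by omega)]
    rw [this]
    simp
  rw [htrim, Finset.sum_range_succ]
  have hLll : Lb A B C D q K l l = 1 := by
    rw [Lb, if_neg (by omega), if_pos rfl]
  have hsml : ∀ s ∈ Finset.range l,
      Lb A B C D q K j s * RicS A B C D q s * (Lb A B C D q K l s)ᵀ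
        = Lp A B C D q j s * RicS A B C D q s * (Lp A B C D q l s)ᵀ := by
    intro s hs
    have hs' : s < l := Finset.mem_range.mp hs
    rw [Lb, if_pos ⟨by omega, by omega⟩, Lb, if_pos ⟨by omega, hs'⟩]
  rw [Finset.sum_congr rfl hsml, hLll, Matrix.transpose_one, Matrix.mul_one]
  rcases Nat.lt_or_ge l j with hcase | hcase
  · rw [Lb, if_pos ⟨hlK, hcase⟩]
    exact coreOff A B C D q N hcase hj (hS l hlK)
  · have hlj' : l = j := le_antisymm hlj hcase
    subst hlj'
    rw [Lb, if_neg (by omega), if_pos rfl, Matrix.one_mul]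
    exact coreDiag A B C D q N hj


lemma master_any (N K : ℕ) {j l : ℕ} (hj : j ≤ N) (hl : l ≤ N) (hmin : j < K ∨ l < K)
    (hS : ∀ s, s < K → IsUnit (RicS A B C D q s).det) :
    Tb A B C D q N j l =
      ∑ s ∈ Finset.range K,
        Lb A B C D q K j s * RicS A B C D q s * (Lb A B C D q K l s)ᵀ := by
  rcases le_or_gt l j with hlj | hjl
  · exact master_low A B C D q N K hlj hj (by omega) hS
  · have h := master_low A B C D q N K (le_of_lt hjl) hl (by omega) hS
    calc Tb A B C D q N j l = (Tb A B C D q N l j)ᵀ := (tb_symm A B C D q N l j).symm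
      _ = (∑ s ∈ Finset.range K,
            Lb A B C D q K l s * RicS A B C D q s * (Lb A B C D q K j s)ᵀ)ᵀ := by rw [h]
      _ = ∑ s ∈ Finset.range K,
            Lb A B C D q K j s * RicS A B C D q s * (Lb A B C D q K l s)ᵀ := by
          rw [Matrix.transpose_sum]
          refine Finset.sum_congr rfl fun s _ => ?_
          rw [Matrix.transpose_mul, Matrix.transpose_mul, Matrix.transpose_transpose,
            rics_transpose, Matrix.mul_assoc]

lemma master_nat (N K : ℕ) (hK : K ≤ N + 1) {j l : ℕ} (hj : j ≤ N) (hl : l ≤ N)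
    (hS : ∀ s, s < K → IsUnit (RicS A B C D q s).det) :
    Tb A B C D q N j l =
      ∑ t ∈ Finset.range (N + 1),
        (∑ s ∈ Finset.range (N + 1), Lb A B C D q K j s * Gb A B C D q N K s t) *
          (Lb A B C D q K l t)ᵀ := by
  have hjmem : j ∈ Finset.range (N + 1) := Finset.mem_range.mpr (by omega)
  have hlmem : l ∈ Finset.range (N + 1) := Finset.mem_range.mpr (by omega)
  have inner : ∀ t ∈ Finset.range (N + 1),
      (∑ s ∈ Finset.range (N + 1), Lb A B C D q K j s * Gb A B C D q N K s t)
        = if t < K then Lb A B C D q K j t * RicS A B C D q t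
          else (if j < K then 0 else Tb A B C D q N j t -
            ∑ u ∈ Finset.range K,
              Lb A B C D q K j u * RicS A B C D q u * (Lb A B C D q K t u)ᵀ) := by
    intro t ht
    by_cases htK : t < K
    · rw [if_pos htK]
      have hterm : ∀ s ∈ Finset.range (N + 1), Lb A B C D q K j s * Gb A B C D q N K s t
          = if s = t then Lb A B C D q K j s * RicS A B C D q s else 0 := by
        intro s _
        rw [Gb, if_pos (Or.inr htK), mul_ite, mul_zero]
      rw [Finset.sum_congr rfl hterm, Finset.sum_ite_eq' (Finset.range (N + 1)) t
        (fun s => Lb A B C D q K j s * RicS A B C D q s), if_pos ht]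
    · rw [if_neg htK]
      have hterm : ∀ s ∈ Finset.range (N + 1), Lb A B C D q K j s * Gb A B C D q N K s t
          = if s = j then (if s < K then 0 else Tb A B C D q N s t -
              ∑ u ∈ Finset.range K,
                Lb A B C D q K s u * RicS A B C D q u * (Lb A B C D q K t u)ᵀ) else 0 := by
        intro s _
        by_cases hsK : s < K
        · have hG : Gb A B C D q N K s t = 0 := by
            rw [Gb, if_pos (Or.inl hsK), if_neg (by omega)]
          rw [hG, mul_zero]
          by_cases hsj : s = j
          · rw [if_pos hsj, if_pos hsK]
          · rw [if_neg hsj]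
        · have hG : Gb A B C D q N K s t = Tb A B C D q N s t -
              ∑ u ∈ Finset.range K,
                Lb A B C D q K s u * RicS A B C D q u * (Lb A B C D q K t u)ᵀ := by
            rw [Gb, if_neg (by omega)]
          have hL : Lb A B C D q K j s = if j = s then 1 else 0 := by
            rw [Lb, if_neg (by omega)]
          rw [hG, hL, ite_mul, Matrix.one_mul, Matrix.zero_mul]
          by_cases hsj : s = j
          · rw [if_pos hsj.symm, if_pos hsj, if_neg (by omega)]
          · rw [if_neg (fun hh => hsj hh.symm), if_neg hsj]
      rw [Finset.sum_congr rfl hterm, Finset.sum_ite_eq' (Finset.range (N + 1)) j _,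
        if_pos hjmem]
  rw [Finset.sum_congr rfl (fun t ht => by rw [inner t ht])]
  have houter : ∀ t ∈ Finset.range (N + 1),
      (if t < K then Lb A B C D q K j t * RicS A B C D q t
          else (if j < K then 0 else Tb A B C D q N j t -
            ∑ u ∈ Finset.range K,
              Lb A B C D q K j u * RicS A B C D q u * (Lb A B C D q K t u)ᵀ)) *
        (Lb A B C D q K l t)ᵀ
      = (if t < K then
            Lb A B C D q K j t * RicS A B C D q t * (Lb A B C D q K l t)ᵀ else 0)
        + (if t = l then (if t < K then 0 else (if j < K then 0 else
            Tb A B C D q N j t -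
            ∑ u ∈ Finset.range K,
              Lb A B C D q K j u * RicS A B C D q u * (Lb A B C D q K t u)ᵀ)) else 0) := by
    intro t _
    by_cases htK : t < K
    · rw [if_pos htK, if_pos htK]
      by_cases htl : t = l
      · rw [if_pos htl, if_pos htK, add_zero]
      · rw [if_neg htl, add_zero]
    · rw [if_neg htK, if_neg htK]
      have hLlt : Lb A B C D q K l t = if l = t then 1 else 0 := by
        rw [Lb, if_neg (by omega)]
      rw [hLlt]
      by_cases htl : t = l
      · rw [if_pos htl.symm, Matrix.transpose_one, Matrix.mul_one, if_pos htl,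
          if_neg htK, zero_add]
      · rw [if_neg (show ¬ l = t from fun hh => htl hh.symm), Matrix.transpose_zero,
          Matrix.mul_zero, if_neg htl, add_zero]
  rw [Finset.sum_congr rfl houter, Finset.sum_add_distrib]
  have hA : ∑ t ∈ Finset.range (N + 1),
      (if t < K then Lb A B C D q K j t * RicS A B C D q t * (Lb A B C D q K l t)ᵀ else 0)
      = ∑ t ∈ Finset.range K,
          Lb A B C D q K j t * RicS A B C D q t * (Lb A B C D q K l t)ᵀ := by
    rw [← Finset.sum_subset (Finset.range_subset_range.mpr hK)
      (fun t _ ht => if_neg (by simpa [Finset.mem_range] using ht))]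
    exact Finset.sum_congr rfl fun t ht => if_pos (Finset.mem_range.mp ht)
  have hB : ∑ t ∈ Finset.range (N + 1),
      (if t = l then (if t < K then 0 else (if j < K then 0 else
          Tb A B C D q N j t -
          ∑ u ∈ Finset.range K,
            Lb A B C D q K j u * RicS A B C D q u * (Lb A B C D q K t u)ᵀ)) else 0)
      = if l < K then 0 else (if j < K then 0 else
          Tb A B C D q N j l -
          ∑ u ∈ Finset.range K,
            Lb A B C D q K j u * RicS A B C D q u * (Lb A B C D q K l u)ᵀ) := by
    rw [Finset.sum_ite_eq' (Finset.range (N + 1)) l _, if_pos hlmem]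
  rw [hA, hB]
  by_cases hcase : l < K ∨ j < K
  · have hzero : (if l < K then 0 else (if j < K then 0 else
        Tb A B C D q N j l -
        ∑ u ∈ Finset.range K,
          Lb A B C D q K j u * RicS A B C D q u * (Lb A B C D q K l u)ᵀ)) = 0 := by
      rcases hcase with h | h
      · rw [if_pos h]
      · by_cases h2 : l < K
        · rw [if_pos h2]
        · rw [if_neg h2, if_pos h]
    rw [hzero, add_zero]
    exact master_any A B C D q N K hj hl (by omega) hS
  · push_neg at hcase
    rw [if_neg (by omega), if_neg (by omega)]
    abel

lemma master (N K : ℕ) (hK : K ≤ N + 1)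
    (hS : ∀ s, s < K → IsUnit (RicS A B C D q s).det) :
    blk N (Tb A B C D q N) =
      blk N (Lb A B C D q K) * blk N (Gb A B C D q N K) * (blk N (Lb A B C D q K))ᵀ := by
  rw [blk_transpose, blk_mul, blk_mul]
  refine blk_ext N fun j l => ?_
  show Tb A B C D q N (j : ℕ) (l : ℕ) =
    ∑ t : Fin (N + 1), (∑ s : Fin (N + 1),
      Lb A B C D q K (j : ℕ) (s : ℕ) * Gb A B C D q N K (s : ℕ) (t : ℕ)) *
        (Lb A B C D q K (l : ℕ) (t : ℕ))ᵀ
  rw [Fin.sum_univ_eq_sum_range (fun t => (∑ s : Fin (N + 1),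
      Lb A B C D q K (j : ℕ) (s : ℕ) * Gb A B C D q N K (s : ℕ) t) *
        (Lb A B C D q K (l : ℕ) t)ᵀ) (N + 1)]
  have hin : ∀ t, (∑ s : Fin (N + 1),
      Lb A B C D q K (j : ℕ) (s : ℕ) * Gb A B C D q N K (s : ℕ) t)
      = ∑ s ∈ Finset.range (N + 1),
          Lb A B C D q K (j : ℕ) s * Gb A B C D q N K s t := fun t =>
    Fin.sum_univ_eq_sum_range (fun s => Lb A B C D q K (j : ℕ) s * Gb A B C D q N K s t) (N + 1)
  rw [Finset.sum_congr rfl (fun t _ => by rw [hin t])]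
  exact master_nat A B C D q N K hK (by omega) (by omega) hS

lemma gb_kk (N k : ℕ) (hk : k ≤ N) : Gb A B C D q N k k k = RicS A B C D q k := by
  rw [Gb, if_neg (by omega)]
  have hsum : ∑ s ∈ Finset.range k,
      Lb A B C D q k k s * RicS A B C D q s * (Lb A B C D q k k s)ᵀ
      = ∑ s ∈ Finset.range k,
          Lp A B C D q k s * RicS A B C D q s * (Lp A B C D q k s)ᵀ := by
    refine Finset.sum_congr rfl fun s hs => ?_
    have hs' : s < k := Finset.mem_range.mp hs
    rw [Lb, if_pos ⟨hs', hs'⟩]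
  rw [hsum, coreDiag A B C D q N hk, add_sub_cancel_left]

lemma lb_det (N K : ℕ) : (blk N (Lb A B C D q K)).det = 1 := by
  rw [det_blk N _ (fun j l h => by rw [Lb, if_neg (by omega), if_neg (by omega)])]
  have hd : ∀ v : Fin (N + 1), Lb A B C D q K (v : ℕ) (v : ℕ) = 1 := fun v => by
    rw [Lb, if_neg (by omega), if_pos rfl]
  rw [Finset.prod_congr rfl (fun v _ => by rw [hd v, Matrix.det_one])]
  exact Finset.prod_const_one

lemma gb_det (N : ℕ) : (blk N (Gb A B C D q N (N + 1))).det
    = ∏ v : Fin (N + 1), (RicS A B C D q (v : ℕ)).det := by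
  rw [det_blk N _ (fun j l h => by
    rw [Gb, if_pos (Or.inl j.isLt), if_neg (by omega)])]
  refine Finset.prod_congr rfl fun v _ => ?_
  rw [Gb, if_pos (Or.inl v.isLt), if_pos rfl]

lemma bigT_pos (N : ℕ) (hm : 0 < m) (hq : 0 ≤ q)
    (hq' : q < (sigmaMax (Fsys N A B C D) ^ 2)⁻¹) :
    ∀ x : Fin (N + 1) × Fin r → ℝ, x ≠ 0 →
      0 < x ⬝ᵥ ((1 - q • (Fsys N A B C D * (Fsys N A B C D)ᵀ)).mulVec x) := by
  intro x hx
  set F := Fsys N A B C D with hF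
  haveI : Nonempty (Fin (N + 1) × Fin m) := ⟨(0, ⟨0, hm⟩)⟩
  have hσ : 0 ≤ sigmaMax F := sigma_nonneg F
  have hq1 : q * (sigmaMax F)^2 < 1 := by
    rcases eq_or_lt_of_le hσ with h0 | h0
    · rw [← h0] at hq'
      norm_num at hq'
      linarith
    · have h2 : 0 < (sigmaMax F)^2 := by positivity
      have := mul_lt_mul_of_pos_right hq' h2
      rwa [inv_mul_cancel₀ h2.ne'] at this
  set y := Fᵀ.mulVec x with hy
  have hxx : 0 < ∑ j, (x j)^2 := by
    obtain ⟨p0, hp0⟩ := Function.ne_iff.mp hx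
    exact Finset.sum_pos' (fun i _ => sq_nonneg _)
      ⟨p0, Finset.mem_univ _, lt_of_le_of_ne (sq_nonneg _) (Ne.symm (pow_ne_zero 2 hp0))⟩
  have dualpair : ∀ v, (Fᵀ.mulVec x) ⬝ᵥ v = x ⬝ᵥ F.mulVec v := by
    intro v
    rw [Matrix.mulVec_transpose, ← Matrix.dotProduct_mulVec]
  have hquad : x ⬝ᵥ ((1 - q • (F * Fᵀ)).mulVec x) = (∑ j, (x j)^2) - q * ∑ i, (y i)^2 := by
    rw [Matrix.sub_mulVec, Matrix.one_mulVec, Matrix.smul_mulVec,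
      dotProduct_sub, dotProduct_smul]
    congr 1
    · simp [dotProduct, sq]
    · rw [smul_eq_mul]
      congr 1
      rw [← Matrix.mulVec_mulVec, ← dualpair, ← hy]
      simp [dotProduct, sq]
  rw [hquad]
  have hb := sigma_bound_transpose F x
  have hqb : q * ∑ i, (y i)^2 ≤ q * ((sigmaMax F)^2 * ∑ j, (x j)^2) :=
    mul_le_mul_of_nonneg_left hb hq
  nlinarith [hxx, hq1, hqb]

end RicAux

/-- For `0 ≤ q < σ_max(F_{0:N})^{−2}`, the matrices `S₀,…,S_N` of the Riccati
recursion are all positive definite and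
`det(I − q F_{0:N}ᵀ F_{0:N}) = ∏_{k=0}^N det S_k`. -/
theorem riccati_det_factorization
    (n m r N : ℕ) (hn : 0 < n) (hm : 0 < m) (hr : 0 < r)
    (A : ℕ → Matrix (Fin n) (Fin n) ℝ) (B : ℕ → Matrix (Fin n) (Fin m) ℝ)
    (C : ℕ → Matrix (Fin r) (Fin n) ℝ) (D : ℕ → Matrix (Fin r) (Fin m) ℝ)
    (q : ℝ) (hq : 0 ≤ q) (hq' : q < (sigmaMax (Fsys N A B C D) ^ 2)⁻¹) :
    (∀ k ≤ N, (RicS A B C D q k).PosDef) ∧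
      (1 - q • ((Fsys N A B C D)ᵀ * Fsys N A B C D)).det =
        ∏ k ∈ Finset.range (N + 1), (RicS A B C D q k).det := by
  classical
  have hTeq := RicAux.bigT_eq A B C D q N
  have hTpos : ∀ x : Fin (N + 1) × Fin r → ℝ, x ≠ 0 →
      0 < x ⬝ᵥ ((RicAux.blk N (RicAux.Tb A B C D q N)).mulVec x) := by
    intro x hx
    rw [← hTeq]
    exact RicAux.bigT_pos A B C D q N hm hq hq' x hx
  have hPD : ∀ k, k ≤ N → (RicS A B C D q k).PosDef := by
    intro k
    induction k using Nat.strong_induction_on with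
    | _ k ih =>
      intro hk
      have hS : ∀ s, s < k → IsUnit (RicS A B C D q s).det := fun s hs =>
        isUnit_iff_ne_zero.mpr (ih s hs (by omega)).det_pos.ne'
      have hfac := RicAux.master A B C D q N k (by omega) hS
      have hLu : IsUnit (RicAux.blk N (RicAux.Lb A B C D q k)).det := by
        rw [RicAux.lb_det]; exact isUnit_one
      have hGpos := fun x hx => RicAux.quad_pos_of_factor hLu hTpos hfac x hx
      refine Matrix.PosDef.of_dotProduct_mulVec_pos (RicAux.rics_hermitian A B C D q k) fun x hx => ?_
      have hstar : star x = x := funext fun i => star_trivial _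
      rw [hstar]
      have hdiag := RicAux.quad_pos_diag N (RicAux.Gb A B C D q N k) hGpos
        ⟨k, by omega⟩ x hx
      rwa [show ((⟨k, by omega⟩ : Fin (N + 1)) : ℕ) = k from rfl,
        RicAux.gb_kk A B C D q N k hk] at hdiag
  refine ⟨fun k hk => hPD k hk, ?_⟩
  have hSall : ∀ s, s < N + 1 → IsUnit (RicS A B C D q s).det := fun s hs =>
    isUnit_iff_ne_zero.mpr (hPD s (by omega)).det_pos.ne'
  have hfac := RicAux.master A B C D q N (N + 1) le_rfl hSall
  have h1 : (1 - q • ((Fsys N A B C D)ᵀ * Fsys N A B C D)).det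
      = (1 - q • (Fsys N A B C D * (Fsys N A B C D)ᵀ)).det := by
    rw [← Matrix.mul_smul, Matrix.det_one_sub_mul_comm, Matrix.smul_mul]
  rw [h1, hTeq, hfac, Matrix.det_mul, Matrix.det_mul, RicAux.lb_det,
    Matrix.det_transpose, RicAux.lb_det, RicAux.gb_det, one_mul, mul_one]
  exact Fin.prod_univ_eq_prod_range (fun k => (RicS A B C D q k).det) (N + 1)
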